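/- The complex K_• (defined via the free S-modules on generators Φ(a_1,...,a_θ) with differential d = Σ d_i as above), augmented by the counit ε : S → k in degree −1, is exact; that is, K_• is a free resolution of the trivial module k over the quantum complete intersection S. -/

import Mathlib

open FreeAlgebra

variable (k : Type) [Field k]

/-- Relations of a quantum complete intersection. -/
inductive qciRel (θ : ℕ) (N : Fin θ → ℕ) (q : Fin θ → Fin θ → kˣ) :
    FreeAlgebra k (Fin θ) → FreeAlgebra k (Fin θ) → Prop
  | comm (i j : Fin θ) (hij : i < j) :
      qciRel θ N q (ι k i * ι k j) ((q i j : k) • (ι k j * ι k i))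
  | nil (i : Fin θ) : qciRel θ N q (ι k i ^ N i) 0

/-- The quantum complete intersection algebra `S`. -/
abbrev QCI (θ : ℕ) (N : Fin θ → ℕ) (q : Fin θ → Fin θ → kˣ) : Type :=
  RingQuot (qciRel k θ N q)

/-- The augmentation of `S`, sending each generator to `0`. -/
noncomputable def qciAug (θ : ℕ) (N : Fin θ → ℕ) (q : Fin θ → Fin θ → kˣ)
    (hN : ∀ i, N i ≠ 0) : QCI k θ N q →ₐ[k] k :=
  RingQuot.liftAlgHom k ⟨FreeAlgebra.lift k (fun _ => (0 : k)), by
    rintro a b (⟨i, j, hij⟩ | ⟨i⟩) <;> simp [zero_pow (hN _)]⟩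

variable (θ : ℕ) (N : Fin θ → ℕ) (q : Fin θ → Fin θ → kˣ)

/-- The generator `x_i` of `S`. -/
noncomputable def xgen (i : Fin θ) : QCI k θ N q :=
  RingQuot.mkAlgHom k (qciRel k θ N q) (ι k i)

/-- `σ_i(a) = 1` if `a` is odd, `N_i - 1` if `a` is even. -/
def sigmaExp (Ni a : ℕ) : ℕ := if Odd a then 1 else Ni - 1

/-- `τ_i(a) = Σ_{j=1}^a σ_i(j)`, `τ_i(0) = 0`. -/
def tauExp (Ni a : ℕ) : ℕ := ∑ j ∈ Finset.range a, sigmaExp Ni (j + 1)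

/-- Right multiplication by an element, as a left `S`-linear endomorphism. -/
noncomputable def rmul (c : QCI k θ N q) : QCI k θ N q →ₗ[QCI k θ N q] QCI k θ N q where
  toFun s := s * c
  map_add' a b := add_mul a b c
  map_smul' a b := by simp [smul_eq_mul, mul_assoc]

/-- The scalar `∏_{ℓ<i} (-1)^{a_ℓ} q_{ℓi}^{σ_i(a_i) τ_ℓ(a_ℓ)}`. -/
noncomputable def dCoeff (i : Fin θ) (a : Fin θ → ℕ) : k :=
  ∏ ℓ ∈ Finset.univ.filter (fun ℓ : Fin θ => ℓ < i),
    ((-1 : k) ^ (a ℓ) * (q ℓ i : k) ^ (sigmaExp (N i) (a i) * tauExp (N ℓ) (a ℓ)))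

/-- Index set for the degree `n` part of the Koszul-type complex:
`θ`-tuples of nonnegative integers summing to `n`. -/
def Idx (n : ℕ) : Type := {a : Fin θ → ℕ // ∑ i, a i = n}

/-- The degree `n` term `K_n = ⊕_{a_1+⋯+a_θ = n} S·Φ(a_1,…,a_θ)`. -/
abbrev KnMod (n : ℕ) : Type := Idx θ n →₀ QCI k θ N q

/-- The component `d_i` of the differential in degree `n + 1`. -/
noncomputable def dgr (i : Fin θ) (n : ℕ) :
    KnMod k θ N q (n + 1) →ₗ[QCI k θ N q] KnMod k θ N q n :=
  Finsupp.lsum ℕ fun a =>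
    if h : a.1 i = 0 then 0
    else (Finsupp.lsingle (⟨Function.update a.1 i (a.1 i - 1), by
        have h2 := Finset.add_sum_erase Finset.univ a.1 (Finset.mem_univ i)
        have h3 := Finset.add_sum_erase Finset.univ
          (Function.update a.1 i (a.1 i - 1)) (Finset.mem_univ i)
        have h4 : ∑ x ∈ Finset.univ.erase i, Function.update a.1 i (a.1 i - 1) x =
            ∑ x ∈ Finset.univ.erase i, a.1 x :=
          Finset.sum_congr rfl fun x hx =>
            Function.update_of_ne (Finset.ne_of_mem_erase hx) _ _
        have h5 : Function.update a.1 i (a.1 i - 1) i = a.1 i - 1 :=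
          Function.update_self _ _ _
        have h6 := a.2
        rw [h4, h5] at h3
        omega⟩ : Idx θ n)).comp
      (rmul k θ N q
        (algebraMap k (QCI k θ N q) (dCoeff k θ N q i a.1) *
          xgen k θ N q i ^ sigmaExp (N i) (a.1 i)))

/-- The total differential `d = d_1 + ⋯ + d_θ` in degree `n + 1`. -/
noncomputable def dTot (n : ℕ) :
    KnMod k θ N q (n + 1) →ₗ[QCI k θ N q] KnMod k θ N q n :=
  ∑ i, dgr k θ N q i n

/-! ### Auxiliary development -/

section Koszul

open Finset in
lemma sum_update_univ' {θ : ℕ} (a : Fin θ → ℕ) (i : Fin θ) (v : ℕ) :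
    ∑ x, Function.update a i v x = v + ∑ x ∈ Finset.univ.erase i, a x := by
  rw [← Finset.add_sum_erase _ _ (Finset.mem_univ i), Function.update_self]
  congr 1
  exact Finset.sum_congr rfl fun x hx => Function.update_of_ne (Finset.ne_of_mem_erase hx) _ _

/-- `∏ ℓ, f ℓ (update b i v ℓ)` extracted. -/
lemma prod_update_split {θ : ℕ} {M : Type*} [CommMonoid M] (f : Fin θ → ℕ → M)
    (b : Fin θ → ℕ) (i : Fin θ) (v : ℕ) :
    ∏ ℓ, f ℓ (Function.update b i v ℓ) = f i v * ∏ ℓ ∈ Finset.univ.erase i, f ℓ (b ℓ) := by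
  have : (fun ℓ => f ℓ (Function.update b i v ℓ)) =
      Function.update (fun ℓ => f ℓ (b ℓ)) i (f i v) := by
    funext ℓ
    rcases eq_or_ne ℓ i with rfl | h
    · simp
    · simp [Function.update_of_ne h]
  rw [this, Finset.prod_update_of_mem (Finset.mem_univ i)]
  congr 1
  exact (Finset.sdiff_singleton_eq_erase i Finset.univ) ▸ rfl

lemma prod_split' {θ : ℕ} {M : Type*} [CommMonoid M] (f : Fin θ → M) (i : Fin θ) :
    ∏ ℓ, f ℓ = f i * ∏ ℓ ∈ Finset.univ.erase i, f ℓ :=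
  (Finset.mul_prod_erase _ _ (Finset.mem_univ i)).symm

variable {k : Type} [Field k] {θ : ℕ} {N : Fin θ → ℕ} {q : Fin θ → Fin θ → kˣ}

lemma xg_comm {i j : Fin θ} (hij : i < j) :
    xgen k θ N q i * xgen k θ N q j = (q i j : k) • (xgen k θ N q j * xgen k θ N q i) := by
  have := RingQuot.mkAlgHom_rel k (qciRel.comm (k := k) (N := N) (q := q) i j hij)
  simpa [xgen, map_mul, map_smul] using this

lemma xg_pow_rel (i : Fin θ) : xgen k θ N q i ^ N i = 0 := by
  have := RingQuot.mkAlgHom_rel k (qciRel.nil (k := k) (N := N) (q := q) i)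
  simpa [xgen, map_pow] using this

lemma xg_pow_eq_zero {i : Fin θ} {s : ℕ} (hs : N i ≤ s) : xgen k θ N q i ^ s = 0 := by
  rw [← Nat.add_sub_cancel' hs, pow_add, xg_pow_rel, zero_mul]

lemma xg_swap {i j : Fin θ} (hij : i < j) :
    xgen k θ N q j * xgen k θ N q i = ((q i j : k)⁻¹) • (xgen k θ N q i * xgen k θ N q j) := by
  rw [xg_comm hij, smul_smul, inv_mul_cancel₀ (Units.ne_zero _), one_smul]

lemma xg_pow_swap {i j : Fin θ} (hij : i < j) (t : ℕ) :
    xgen k θ N q j ^ t * xgen k θ N q i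
      = (((q i j : k)⁻¹) ^ t) • (xgen k θ N q i * xgen k θ N q j ^ t) := by
  induction t with
  | zero => simp
  | succ t ih =>
      rw [pow_succ, mul_assoc, xg_swap hij, mul_smul_comm, ← mul_assoc, ih,
        smul_mul_assoc, smul_smul, mul_assoc, ← pow_succ]
      congr 1
      rw [pow_succ]
      ring

/-- The ordered monomial `x₁^{b₁} ⋯ x_θ^{b_θ}`. -/
noncomputable def mono (b : Fin θ → ℕ) : QCI k θ N q :=
  ((List.finRange θ).map fun ℓ => xgen k θ N q ℓ ^ b ℓ).prod

lemma mono_zero : mono (k := k) (N := N) (q := q) (fun _ : Fin θ => 0) = 1 := by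
  apply List.prod_eq_one
  intro x hx
  rcases List.mem_map.mp hx with ⟨ℓ, _, rfl⟩
  exact pow_zero _

lemma mono_eq_zero {b : Fin θ → ℕ} {i : Fin θ} (h : N i ≤ b i) :
    mono (k := k) (N := N) (q := q) b = 0 := by
  apply List.prod_eq_zero
  refine List.mem_map.mpr ⟨i, List.mem_finRange i, ?_⟩
  rw [xg_pow_eq_zero h]

/-- Pass `x_i` through a product of blocks with larger indices. -/
lemma pass_lemma (i : Fin θ) (b : Fin θ → ℕ) :
    ∀ L : List (Fin θ), (∀ ℓ ∈ L, i < ℓ) →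
    (L.map fun ℓ => xgen k θ N q ℓ ^ b ℓ).prod * xgen k θ N q i
      = ((L.map fun ℓ => ((q i ℓ : k)⁻¹) ^ b ℓ).prod) •
        (xgen k θ N q i * (L.map fun ℓ => xgen k θ N q ℓ ^ b ℓ).prod) := by
  intro L
  induction L with
  | nil => simp
  | cons a L ih =>
      intro hL
      have ha : i < a := hL a (List.mem_cons_self)
      have hL' : ∀ ℓ ∈ L, i < ℓ := fun ℓ hℓ => hL ℓ (List.mem_cons_of_mem a hℓ)
      simp only [List.map_cons, List.prod_cons]
      rw [mul_assoc, ih hL', mul_smul_comm, ← mul_assoc, xg_pow_swap ha,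
        smul_mul_assoc, smul_smul, mul_assoc]
      congr 1
      ring

/-- Straightening: multiply an ordered monomial over a sorted list by `x_i` on the right. -/
lemma sorted_mono_mul (i : Fin θ) (b : Fin θ → ℕ) :
    ∀ L : List (Fin θ), L.Pairwise (· < ·) → i ∈ L →
    (L.map fun ℓ => xgen k θ N q ℓ ^ b ℓ).prod * xgen k θ N q i
      = ((L.map fun ℓ => if i < ℓ then ((q i ℓ : k)⁻¹) ^ b ℓ else 1).prod) •
        (L.map fun ℓ => xgen k θ N q ℓ ^ (Function.update b i (b i + 1)) ℓ).prod := by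
  intro L
  induction L with
  | nil => intro _ h; simp at h
  | cons a L ih =>
      intro hp hm
      have hpl : L.Pairwise (· < ·) := hp.of_cons
      have hal : ∀ ℓ ∈ L, a < ℓ := fun ℓ hℓ => (List.pairwise_cons.mp hp).1 ℓ hℓ
      simp only [List.map_cons, List.prod_cons]
      rcases List.mem_cons.mp hm with rfl | hmem
      · -- head is i
        rw [mul_assoc, pass_lemma i b L (fun ℓ hℓ => hal ℓ hℓ), mul_smul_comm,
          ← mul_assoc, ← pow_succ]
        have h1 : (Function.update b i (b i + 1)) i = b i + 1 := Function.update_self _ _ _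
        have h2 : (L.map fun ℓ => xgen k θ N q ℓ ^ (Function.update b i (b i + 1)) ℓ)
            = L.map fun ℓ => xgen k θ N q ℓ ^ b ℓ := by
          apply List.map_congr_left
          intro ℓ hℓ
          rw [Function.update_of_ne (Ne.symm (ne_of_lt (hal ℓ hℓ)))]
        have h3 : (if i < i then ((q i i : k)⁻¹) ^ b i else 1) = 1 := by simp
        have h4 : (L.map fun ℓ => if i < ℓ then ((q i ℓ : k)⁻¹) ^ b ℓ else 1)
            = L.map fun ℓ => ((q i ℓ : k)⁻¹) ^ b ℓ := by
          apply List.map_congr_left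
          intro ℓ hℓ
          rw [if_pos (hal ℓ hℓ)]
        rw [h1, h2, h3, h4, one_mul]
      · -- head a ≠ i, a < i
        have hai : a < i := by
          rcases (List.pairwise_cons.mp hp) with ⟨h1, _⟩
          exact h1 i hmem
        have h3 : (if i < a then ((q i a : k)⁻¹) ^ b a else 1) = 1 := by
          simp [not_lt_of_gt hai]
        have h4 : Function.update b i (b i + 1) a = b a :=
          Function.update_of_ne (ne_of_lt hai) _ _
        rw [mul_assoc, ih hpl hmem, mul_smul_comm, h4, h3, one_mul]

/-- The scalar for right multiplication by `x_i^t`. -/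
noncomputable def rc (i : Fin θ) (t : ℕ) (b : Fin θ → ℕ) : k :=
  ∏ ℓ, if i < ℓ then ((q i ℓ : k)⁻¹) ^ (t * b ℓ) else 1

lemma rc_ne_zero (i : Fin θ) (t : ℕ) (b : Fin θ → ℕ) : rc (q := q) i t b ≠ 0 := by
  apply Finset.prod_ne_zero_iff.mpr
  intro ℓ _
  split
  · exact pow_ne_zero _ (inv_ne_zero (Units.ne_zero _))
  · exact one_ne_zero

lemma mono_mul_xg (i : Fin θ) (b : Fin θ → ℕ) :
    mono (k := k) (N := N) (q := q) b * xgen k θ N q i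
      = rc (q := q) i 1 b • mono (Function.update b i (b i + 1)) := by
  rw [mono, sorted_mono_mul i b (List.finRange θ) (List.pairwise_lt_finRange θ)
    (List.mem_finRange i)]
  congr 1
  rw [← Fin.prod_univ_def]
  simp [rc, one_mul]

lemma rc_mul (i : Fin θ) (t s : ℕ) (b : Fin θ → ℕ) :
    rc (q := q) i t b * rc (q := q) i s b = rc (q := q) i (t + s) b := by
  rw [rc, rc, rc, ← Finset.prod_mul_distrib]
  apply Finset.prod_congr rfl
  intro ℓ _
  split
  · rw [← pow_add, ← Nat.add_mul]
  · rw [one_mul]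

lemma rc_update_self (i : Fin θ) (t : ℕ) (b : Fin θ → ℕ) (v : ℕ) :
    rc (q := q) i t (Function.update b i v) = rc (q := q) i t b := by
  apply Finset.prod_congr rfl
  intro ℓ _
  rcases eq_or_ne ℓ i with rfl | h
  · simp
  · rw [Function.update_of_ne h]

lemma mono_mul_xg_pow (i : Fin θ) (t : ℕ) (b : Fin θ → ℕ) :
    mono (k := k) (N := N) (q := q) b * xgen k θ N q i ^ t
      = rc (q := q) i t b • mono (Function.update b i (b i + t)) := by
  induction t with
  | zero =>
      simp only [pow_zero, mul_one, Nat.add_zero, Function.update_eq_self]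
      rw [show rc (q := q) i 0 b = 1 from ?_, one_smul]
      apply Finset.prod_eq_one; intro ℓ _; split <;> simp
  | succ t ih =>
      rw [pow_succ, ← mul_assoc, ih, smul_mul_assoc, mono_mul_xg, smul_smul,
        rc_update_self, rc_mul]
      rw [Function.update_idem, Function.update_self, Nat.add_assoc]

end Koszul
section Model

variable {k : Type} [Field k] {θ : ℕ} {N : Fin θ → ℕ} {q : Fin θ → Fin θ → kˣ}

/-- coefficient for the left action of `x_i` on the monomial basis. -/
noncomputable def cf (q : Fin θ → Fin θ → kˣ) (i : Fin θ) (b : Fin θ → ℕ) : k :=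
  ∏ ℓ, if ℓ < i then ((q ℓ i : k)⁻¹) ^ (b ℓ) else 1

/-- The operator by which `x_i` acts on the monomial model. -/
noncomputable def Xop (k : Type) [Field k] (θ : ℕ) (N : Fin θ → ℕ) (q : Fin θ → Fin θ → kˣ)
    (i : Fin θ) : ((Fin θ → ℕ) →₀ k) →ₗ[k] ((Fin θ → ℕ) →₀ k) :=
  Finsupp.lsum k fun b =>
    if b i + 1 < N i then
      cf q i b • Finsupp.lsingle (Function.update b i (b i + 1))
    else 0

lemma Xop_single (i : Fin θ) (b : Fin θ → ℕ) (c : k) :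
    Xop k θ N q i (Finsupp.single b c)
      = if b i + 1 < N i then
          Finsupp.single (Function.update b i (b i + 1)) (cf q i b * c)
        else 0 := by
  rw [Xop, Finsupp.lsum_single]
  split
  · simp [Finsupp.smul_single, smul_eq_mul]
  · simp

lemma Xop_pow_single (i : Fin θ) (t : ℕ) (b : Fin θ → ℕ) (c : k) :
    (Xop k θ N q i ^ t) (Finsupp.single b c)
      = if b i + t < N i ∨ t = 0 then
          Finsupp.single (Function.update b i (b i + t)) ((cf q i b) ^ t * c)
        else 0 := by
  induction t with
  | zero => simp
  | succ t ih =>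
      rw [pow_succ', Module.End.mul_apply, ih]
      by_cases h2 : b i + t < N i ∨ t = 0
      · rw [if_pos h2, Xop_single]
        have hv : Function.update b i (b i + t) i = b i + t := Function.update_self _ _ _
        have hcf : cf q i (Function.update b i (b i + t)) = cf q i b := by
          apply Finset.prod_congr rfl
          intro ℓ _
          rcases eq_or_ne ℓ i with rfl | h
          · simp
          · rw [Function.update_of_ne h]
        rw [hv]
        by_cases h3 : b i + t + 1 < N i
        · rw [if_pos h3, if_pos (by omega), hcf, Function.update_idem]
          congr 1
          rw [pow_succ]
          ring
        · rw [if_neg h3, if_neg (by omega)]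
      · rw [if_neg h2, map_zero, if_neg (by omega)]

lemma cf_update_not_lt {i j : Fin θ} (h : ¬ j < i) (b : Fin θ → ℕ) (v : ℕ) :
    cf q i (Function.update b j v) = cf q i b := by
  apply Finset.prod_congr rfl
  intro ℓ _
  rcases eq_or_ne ℓ j with rfl | hℓ
  · simp [if_neg h]
  · rw [Function.update_of_ne hℓ]

lemma cf_update_lt {i j : Fin θ} (h : j < i) (b : Fin θ → ℕ) :
    cf q i (Function.update b j (b j + 1)) = (q j i : k)⁻¹ * cf q i b := by
  rw [cf, cf, prod_update_split (fun ℓ v => if ℓ < i then ((q ℓ i : k)⁻¹) ^ v else 1),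
    prod_split' (fun ℓ => if ℓ < i then ((q ℓ i : k)⁻¹) ^ (b ℓ) else 1) j]
  rw [if_pos h, if_pos h, pow_succ, ← mul_assoc]
  ring

lemma Xop_comm {i j : Fin θ} (hij : i < j) :
    Xop k θ N q i * Xop k θ N q j = (q i j : k) • (Xop k θ N q j * Xop k θ N q i) := by
  apply Finsupp.lhom_ext
  intro b c
  have hij' : ¬ (j < i) := by omega
  have hne : i ≠ j := ne_of_lt hij
  rw [LinearMap.smul_apply, Module.End.mul_apply, Module.End.mul_apply, Xop_single, Xop_single]
  by_cases hj : b j + 1 < N j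
  · by_cases hi : b i + 1 < N i
    · rw [if_pos hj, if_pos hi, Xop_single, Xop_single]
      have e1 : Function.update b j (b j + 1) i = b i := Function.update_of_ne hne _ _
      have e2 : Function.update b i (b i + 1) j = b j := Function.update_of_ne (Ne.symm hne) _ _
      rw [e1, e2, if_pos hi, if_pos hj]
      rw [Function.update_comm hne]
      rw [cf_update_not_lt hij', cf_update_lt hij]
      rw [Finsupp.smul_single]
      congr 1
      have : (q i j : k) ≠ 0 := Units.ne_zero _
      field_simp
      rw [smul_eq_mul, mul_div_cancel₀ _ this]
    · rw [if_pos hj, if_neg hi, Xop_single]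
      have e1 : Function.update b j (b j + 1) i = b i := Function.update_of_ne hne _ _
      rw [e1, if_neg hi]
      simp
  · by_cases hi : b i + 1 < N i
    · rw [if_neg hj, if_pos hi, Xop_single]
      have e2 : Function.update b i (b i + 1) j = b j := Function.update_of_ne (Ne.symm hne) _ _
      rw [e2, if_neg hj]
      simp
    · rw [if_neg hj, if_neg hi]
      simp

lemma Xop_nil (hN : ∀ i, 2 ≤ N i) (i : Fin θ) : Xop k θ N q i ^ N i = 0 := by
  apply Finsupp.lhom_ext
  intro b c
  rw [Xop_pow_single]
  rw [if_neg (by have := hN i; omega)]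
  simp

/-- The representation of `S` on the monomial model. -/
noncomputable def rep (k : Type) [Field k] (θ : ℕ) (N : Fin θ → ℕ) (q : Fin θ → Fin θ → kˣ)
    (hN : ∀ i, 2 ≤ N i) :
    QCI k θ N q →ₐ[k] Module.End k ((Fin θ → ℕ) →₀ k) :=
  RingQuot.liftAlgHom k ⟨FreeAlgebra.lift k (Xop k θ N q), by
    rintro a b (⟨i, j, hij⟩ | ⟨i⟩)
    · rw [map_mul, map_smul, map_mul]
      simp only [FreeAlgebra.lift_ι_apply]
      exact Xop_comm hij
    · rw [map_pow, map_zero]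
      simp only [FreeAlgebra.lift_ι_apply]
      exact Xop_nil hN i⟩

lemma rep_xgen (hN : ∀ i, 2 ≤ N i) (i : Fin θ) :
    rep k θ N q hN (xgen k θ N q i) = Xop k θ N q i := by
  rw [xgen, rep, RingQuot.liftAlgHom_mkAlgHom_apply, FreeAlgebra.lift_ι_apply]

lemma cf_eq_one {i : Fin θ} {b : Fin θ → ℕ} (h : ∀ ℓ, ℓ < i → b ℓ = 0) :
    cf q i b = 1 := by
  apply Finset.prod_eq_one
  intro ℓ _
  split
  · rename_i hℓ
    rw [h ℓ hℓ, pow_zero]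
  · rfl

lemma rep_mono_aux (hN : ∀ i, 2 ≤ N i) (b : Fin θ → ℕ) :
    ∀ L : List (Fin θ), L.Pairwise (· < ·) → (∀ ℓ ∈ L, b ℓ < N ℓ) →
    ((L.map fun ℓ => Xop k θ N q ℓ ^ b ℓ).prod) (Finsupp.single (fun _ => 0) (1 : k))
      = Finsupp.single (fun m => if m ∈ L then b m else 0) 1 := by
  intro L
  induction L with
  | nil => intro _ _; simp
  | cons a L ih =>
      intro hp hr
      have hal : ∀ ℓ ∈ L, a < ℓ := fun ℓ hℓ => (List.pairwise_cons.mp hp).1 ℓ hℓ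
      simp only [List.map_cons, List.prod_cons, Module.End.mul_apply]
      rw [ih hp.of_cons (fun ℓ hℓ => hr ℓ (List.mem_cons_of_mem a hℓ))]
      set c : Fin θ → ℕ := fun m => if m ∈ L then b m else 0 with hc
      have hca : c a = 0 := by
        simp only [hc]
        rw [if_neg]
        intro hmem
        exact absurd (hal a hmem) (lt_irrefl a)
      rw [Xop_pow_single]
      have hba : b a < N a := hr a (List.mem_cons_self)
      rw [if_pos (by rw [hca]; omega)]
      have hcf : cf q a c = 1 := by
        apply cf_eq_one
        intro ℓ hℓ
        simp only [hc]
        rw [if_neg]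
        intro hmem
        exact absurd (hal ℓ hmem) (by omega)
      rw [hcf, one_pow, one_mul, hca, Nat.zero_add]
      congr 1
      funext m
      rcases eq_or_ne m a with rfl | hm
      · rw [Function.update_self, if_pos (List.mem_cons_self)]
      · rw [Function.update_of_ne hm]
        simp only [hc]
        simp [List.mem_cons, hm]

lemma rep_mono (hN : ∀ i, 2 ≤ N i) (b : Fin θ → ℕ) (hb : ∀ i, b i < N i) :
    rep k θ N q hN (mono b) (Finsupp.single (fun _ => 0) (1 : k))
      = Finsupp.single b 1 := by
  rw [mono, map_list_prod]
  have : (List.map (rep k θ N q hN) ((List.finRange θ).map fun ℓ => xgen k θ N q ℓ ^ b ℓ))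
      = (List.finRange θ).map fun ℓ => Xop k θ N q ℓ ^ b ℓ := by
    rw [List.map_map]
    apply List.map_congr_left
    intro ℓ _
    simp only [Function.comp_apply, map_pow, rep_xgen]
  rw [this, rep_mono_aux hN b (List.finRange θ) (List.pairwise_lt_finRange θ)
    (fun ℓ _ => hb ℓ)]
  congr 1
  funext m
  rw [if_pos (List.mem_finRange m)]

end Model
section BasisS

variable {k : Type} [Field k] {θ : ℕ} {N : Fin θ → ℕ} {q : Fin θ → Fin θ → kˣ}

/-- Exponent vectors below `N`. -/
def OkI (θ : ℕ) (N : Fin θ → ℕ) : Type := {b : Fin θ → ℕ // ∀ i, b i < N i}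

/-- Evaluation of the representation at the vacuum vector. -/
noncomputable def Psi (k : Type) [Field k] (θ : ℕ) (N : Fin θ → ℕ) (q : Fin θ → Fin θ → kˣ)
    (hN : ∀ i, 2 ≤ N i) : QCI k θ N q →ₗ[k] ((Fin θ → ℕ) →₀ k) where
  toFun s := rep k θ N q hN s (Finsupp.single (fun _ => 0) 1)
  map_add' a b := by simp only [map_add, LinearMap.add_apply]
  map_smul' c s := by simp only [map_smul, LinearMap.smul_apply, RingHom.id_apply]

lemma Psi_mono (hN : ∀ i, 2 ≤ N i) (b : Fin θ → ℕ) (hb : ∀ i, b i < N i) :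
    Psi k θ N q hN (mono b) = Finsupp.single b 1 := rep_mono hN b hb

lemma mono_mem_span (b : Fin θ → ℕ) :
    mono (k := k) (N := N) (q := q) b ∈
      Submodule.span k (Set.range fun c : OkI θ N => mono (k := k) (N := N) (q := q) c.1) := by
  by_cases hb : ∀ i, b i < N i
  · exact Submodule.subset_span ⟨⟨b, hb⟩, rfl⟩
  · push_neg at hb
    obtain ⟨i, hi⟩ := hb
    rw [mono_eq_zero hi]
    exact Submodule.zero_mem _

lemma span_mul_xg {w : QCI k θ N q} (i : Fin θ)
    (hw : w ∈ Submodule.span k (Set.range fun c : OkI θ N => mono (k := k) (N := N) (q := q) c.1)) :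
    w * xgen k θ N q i ∈
      Submodule.span k (Set.range fun c : OkI θ N => mono (k := k) (N := N) (q := q) c.1) := by
  induction hw using Submodule.span_induction with
  | mem x hx =>
      obtain ⟨c, rfl⟩ := hx
      rw [mono_mul_xg]
      exact Submodule.smul_mem _ _ (mono_mem_span _)
  | zero => rw [zero_mul]; exact Submodule.zero_mem _
  | add x y _ _ hx hy => rw [add_mul]; exact Submodule.add_mem _ hx hy
  | smul c x _ hx => rw [smul_mul_assoc]; exact Submodule.smul_mem _ _ hx

lemma span_mono_top :
    Submodule.span k (Set.range fun c : OkI θ N => mono (k := k) (N := N) (q := q) c.1) = ⊤ := by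
  set W := Submodule.span k (Set.range fun c : OkI θ N => mono (k := k) (N := N) (q := q) c.1)
    with hW
  rw [eq_top_iff]
  intro s _
  obtain ⟨y, rfl⟩ := RingQuot.mkAlgHom_surjective k (qciRel k θ N q) s
  have key : ∀ y : FreeAlgebra k (Fin θ), ∀ w ∈ W,
      w * RingQuot.mkAlgHom k (qciRel k θ N q) y ∈ W := by
    intro y
    induction y using FreeAlgebra.induction with
    | grade0 r =>
        intro w hw
        rw [AlgHom.commutes, Algebra.algebraMap_eq_smul_one, mul_smul_comm, mul_one]
        exact Submodule.smul_mem _ _ hw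
    | grade1 i =>
        intro w hw
        exact span_mul_xg i hw
    | mul a b ha hb =>
        intro w hw
        rw [map_mul, ← mul_assoc]
        exact hb _ (ha _ hw)
    | add a b ha hb =>
        intro w hw
        rw [map_add, left_distrib]
        exact Submodule.add_mem _ (ha _ hw) (hb _ hw)
  have h1 : (1 : QCI k θ N q) ∈ W := by
    rw [← mono_zero (k := k) (N := N) (q := q)]
    exact mono_mem_span _
  simpa using key y 1 h1

lemma mono_linearIndependent (hN : ∀ i, 2 ≤ N i) :
    LinearIndependent k (fun c : OkI θ N => mono (k := k) (N := N) (q := q) c.1) := by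
  apply LinearIndependent.of_comp (Psi k θ N q hN)
  have he : (Psi k θ N q hN ∘ fun c : OkI θ N => mono (k := k) (N := N) (q := q) c.1)
      = fun c : OkI θ N => Finsupp.single (α := Fin θ → ℕ) c.1 (1 : k) := by
    funext c
    exact Psi_mono hN c.1 c.2
  rw [he]
  exact (Finsupp.basisSingleOne.linearIndependent).comp Subtype.val Subtype.val_injective

/-- PBW basis of the quantum complete intersection. -/
noncomputable def basisS (k : Type) [Field k] (θ : ℕ) (N : Fin θ → ℕ) (q : Fin θ → Fin θ → kˣ)
    (hN : ∀ i, 2 ≤ N i) : Module.Basis (OkI θ N) k (QCI k θ N q) :=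
  Module.Basis.mk (mono_linearIndependent hN) (by rw [span_mono_top])

lemma basisS_apply (hN : ∀ i, 2 ≤ N i) (c : OkI θ N) :
    basisS k θ N q hN c = mono c.1 := Module.Basis.mk_apply _ _ _

end BasisS
section Scalars

variable {k : Type} [Field k] {θ : ℕ} {N : Fin θ → ℕ} {q : Fin θ → Fin θ → kˣ}

lemma sigma_pos {m : ℕ} (hm : 2 ≤ m) (t : ℕ) : 1 ≤ sigmaExp m t := by
  rw [sigmaExp]; split <;> omega

lemma sigma_pair {m : ℕ} (hm : 1 ≤ m) (t : ℕ) :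
    sigmaExp m t + sigmaExp m (t + 1) = m := by
  rw [sigmaExp, sigmaExp]
  rcases Nat.even_or_odd t with he | ho
  · rw [if_neg (Nat.not_odd_iff_even.mpr he), if_pos (Even.add_one he)]
    omega
  · rw [if_pos ho, if_neg (Nat.not_odd_iff_even.mpr (Odd.add_one ho))]
    omega

lemma sigma_notraise {m : ℕ} (hm : 2 ≤ m) {t v : ℕ} (h : ¬ sigmaExp m (t + 1) ≤ v) :
    v + sigmaExp m t < m := by
  have := sigma_pair (by omega : 1 ≤ m) t
  omega

lemma tau_succ (m t : ℕ) : tauExp m (t + 1) = tauExp m t + sigmaExp m (t + 1) :=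
  Finset.sum_range_succ _ _

lemma dCoeff_ne_zero (i : Fin θ) (a : Fin θ → ℕ) : dCoeff k θ N q i a ≠ 0 := by
  rw [dCoeff]
  apply Finset.prod_ne_zero_iff.mpr
  intro ℓ _
  exact mul_ne_zero (pow_ne_zero _ (neg_ne_zero.mpr one_ne_zero))
    (pow_ne_zero _ (Units.ne_zero _))

/-- The full coefficient of `d_i` on the basis element `x^b Φ(a)`. -/
noncomputable def gg (N : Fin θ → ℕ) (q : Fin θ → Fin θ → kˣ) (i : Fin θ)
    (a b : Fin θ → ℕ) : k :=
  dCoeff k θ N q i a * rc (q := q) i (sigmaExp (N i) (a i)) b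

lemma gg_ne_zero (i : Fin θ) (a b : Fin θ → ℕ) : gg (k := k) N q i a b ≠ 0 :=
  mul_ne_zero (dCoeff_ne_zero i a) (rc_ne_zero i _ b)

lemma dCoeff_update_ge {i j : Fin θ} (hij : ¬ j < i) (hne : j ≠ i) (a : Fin θ → ℕ) (v : ℕ) :
    dCoeff k θ N q i (Function.update a j v) = dCoeff k θ N q i a := by
  rw [dCoeff, dCoeff]
  have hi : Function.update a j v i = a i := Function.update_of_ne (Ne.symm hne) _ _
  apply Finset.prod_congr rfl
  intro ℓ hℓ
  have hℓi : ℓ < i := (Finset.mem_filter.mp hℓ).2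
  have : ℓ ≠ j := fun h => hij (h ▸ hℓi)
  rw [Function.update_of_ne this, hi]

lemma dCoeff_update_lower {i j : Fin θ} (hij : i < j) {a : Fin θ → ℕ} (ha : 1 ≤ a i) :
    dCoeff k θ N q j (Function.update a i (a i - 1))
        * (q i j : k) ^ (sigmaExp (N i) (a i) * sigmaExp (N j) (a j))
      = - dCoeff k θ N q j a := by
  rw [Nat.mul_comm (sigmaExp (N i) (a i)) (sigmaExp (N j) (a j))]
  have hji : Function.update a i (a i - 1) j = a j :=
    Function.update_of_ne (Ne.symm (ne_of_lt hij)) _ _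
  have hmem : i ∈ Finset.univ.filter (fun ℓ : Fin θ => ℓ < j) :=
    Finset.mem_filter.mpr ⟨Finset.mem_univ i, hij⟩
  rw [dCoeff, dCoeff, ← Finset.mul_prod_erase _ _ hmem, ← Finset.mul_prod_erase _ _ hmem]
  have herase : ∀ ℓ ∈ (Finset.univ.filter (fun ℓ : Fin θ => ℓ < j)).erase i,
      ((-1 : k) ^ (Function.update a i (a i - 1) ℓ)
        * (q ℓ j : k) ^ (sigmaExp (N j) (Function.update a i (a i - 1) j)
            * tauExp (N ℓ) (Function.update a i (a i - 1) ℓ)))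
      = ((-1 : k) ^ (a ℓ) * (q ℓ j : k) ^ (sigmaExp (N j) (a j) * tauExp (N ℓ) (a ℓ))) := by
    intro ℓ hℓ
    rw [Function.update_of_ne (Finset.ne_of_mem_erase hℓ), hji]
  rw [Finset.prod_congr rfl herase]
  rw [Function.update_self, hji]
  have htau : tauExp (N i) (a i) = tauExp (N i) (a i - 1) + sigmaExp (N i) (a i) := by
    have := tau_succ (N i) (a i - 1)
    rw [Nat.sub_add_cancel ha] at this
    omega
  have hsgn : (-1 : k) ^ (a i) = -(-1 : k) ^ (a i - 1) := by
    obtain ⟨t, ht⟩ : ∃ t, a i = t + 1 := ⟨a i - 1, by omega⟩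
    rw [ht]
    simp [pow_succ]
  rw [htau, hsgn, Nat.mul_add, pow_add]
  ring

lemma rc_update_le {i j : Fin θ} (hij : i ≤ j) (t : ℕ) (b : Fin θ → ℕ) (v : ℕ) :
    rc (q := q) j t (Function.update b i v) = rc (q := q) j t b := by
  apply Finset.prod_congr rfl
  intro ℓ _
  rcases eq_or_ne ℓ i with rfl | h
  · have : ¬ j < ℓ := not_lt_of_ge hij
    rw [if_neg this, if_neg this]
  · rw [Function.update_of_ne h]

lemma rc_update_gt {i j : Fin θ} (hij : i < j) (t : ℕ) (b : Fin θ → ℕ) (s : ℕ) :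
    rc (q := q) i t (Function.update b j (b j + s))
      = rc (q := q) i t b * ((q i j : k)⁻¹) ^ (t * s) := by
  rw [rc, rc, prod_update_split (fun ℓ v => if i < ℓ then ((q i ℓ : k)⁻¹) ^ (t * v) else 1),
    prod_split' (fun ℓ => if i < ℓ then ((q i ℓ : k)⁻¹) ^ (t * b ℓ) else 1) j]
  rw [if_pos hij, if_pos hij, Nat.mul_add, pow_add]
  ring

/-- The crucial anticommutation identity between the coefficients of `d_i` and `d_j`. -/
lemma anti_lt {i j : Fin θ} (hij : i < j) {a : Fin θ → ℕ} (b : Fin θ → ℕ)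
    (hai : 1 ≤ a i) :
    gg (k := k) N q i a b
        * gg (k := k) N q j (Function.update a i (a i - 1))
            (Function.update b i (b i + sigmaExp (N i) (a i)))
      + gg (k := k) N q j a b
        * gg (k := k) N q i (Function.update a j (a j - 1))
            (Function.update b j (b j + sigmaExp (N j) (a j)))
      = 0 := by
  have hQ : (q i j : k) ≠ 0 := Units.ne_zero _
  rw [gg, gg, gg, gg]
  have e1 : Function.update a i (a i - 1) j = a j :=
    Function.update_of_ne (Ne.symm (ne_of_lt hij)) _ _
  have e2 : Function.update a j (a j - 1) i = a i :=
    Function.update_of_ne (ne_of_lt hij) _ _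
  rw [e1, e2]
  rw [rc_update_le (q := q) (le_of_lt hij), rc_update_gt (q := q) hij,
    dCoeff_update_ge (k := k) (N := N) (q := q) (asymm hij) (Ne.symm (ne_of_lt hij))]
  have hD2 := dCoeff_update_lower (k := k) (N := N) (q := q) hij hai
  have hX : dCoeff k θ N q j (Function.update a i (a i - 1))
      = - dCoeff k θ N q j a
          * ((q i j : k) ^ (sigmaExp (N i) (a i) * sigmaExp (N j) (a j)))⁻¹ := by
    rw [eq_mul_inv_iff_mul_eq₀ (pow_ne_zero _ hQ)]
    exact hD2
  rw [hX, inv_pow]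
  field_simp
  ring

end Scalars
section Differential

variable {k : Type} [Field k] {θ : ℕ} {N : Fin θ → ℕ} {q : Fin θ → Fin θ → kˣ}

/-- Lower the `i`-th entry of a degree-`(n+1)` index. -/
def lowIdx (n : ℕ) (i : Fin θ) (a : Idx θ (n + 1)) (h : a.1 i ≠ 0) : Idx θ n :=
  ⟨Function.update a.1 i (a.1 i - 1), by
    have h2 := Finset.add_sum_erase Finset.univ a.1 (Finset.mem_univ i)
    have h3 := sum_update_univ' a.1 i (a.1 i - 1)
    have h6 := a.2
    omega⟩

/-- Raise the `i`-th entry of a degree-`n` index. -/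
def upIdx (n : ℕ) (a : Idx θ n) (i : Fin θ) : Idx θ (n + 1) :=
  ⟨Function.update a.1 i (a.1 i + 1), by
    have h2 := Finset.add_sum_erase Finset.univ a.1 (Finset.mem_univ i)
    have h3 := sum_update_univ' a.1 i (a.1 i + 1)
    have h6 := a.2
    omega⟩

lemma dgr_single_zero (i : Fin θ) (n : ℕ) (a : Idx θ (n + 1)) (s : QCI k θ N q)
    (h : a.1 i = 0) : dgr k θ N q i n (Finsupp.single a s) = 0 := by
  rw [dgr, Finsupp.lsum_single]; erw [dif_pos h]
  rfl

lemma dgr_single_mono (i : Fin θ) (n : ℕ) (a : Idx θ (n + 1)) (h : a.1 i ≠ 0)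
    (b : Fin θ → ℕ) :
    dgr k θ N q i n (Finsupp.single a (mono b))
      = gg (k := k) N q i a.1 b •
          Finsupp.single (lowIdx n i a h)
            (mono (Function.update b i (b i + sigmaExp (N i) (a.1 i)))) := by
  rw [dgr, Finsupp.lsum_single]; erw [dif_neg h]
  show Finsupp.lsingle (R := QCI k θ N q) (lowIdx n i a h)
      (rmul k θ N q (algebraMap k (QCI k θ N q) (dCoeff k θ N q i a.1)
        * xgen k θ N q i ^ sigmaExp (N i) (a.1 i)) (mono b)) = _
  have h1 : rmul k θ N q
      (algebraMap k (QCI k θ N q) (dCoeff k θ N q i a.1)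
        * xgen k θ N q i ^ sigmaExp (N i) (a.1 i)) (mono b)
      = mono b * (algebraMap k (QCI k θ N q) (dCoeff k θ N q i a.1)
          * xgen k θ N q i ^ sigmaExp (N i) (a.1 i)) := rfl
  rw [h1, ← Algebra.smul_def, mul_smul_comm, mono_mul_xg_pow, smul_smul]
  rw [Finsupp.lsingle_apply, Finsupp.smul_single]
  rfl

lemma aug_xgen (hN' : ∀ i, N i ≠ 0) (i : Fin θ) :
    qciAug k θ N q hN' (xgen k θ N q i) = 0 := by
  rw [qciAug, xgen, RingQuot.liftAlgHom_mkAlgHom_apply, FreeAlgebra.lift_ι_apply]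

lemma aug_mono_ne (hN' : ∀ i, N i ≠ 0) {b : Fin θ → ℕ} (i : Fin θ) (h : b i ≠ 0) :
    qciAug k θ N q hN' (mono b) = 0 := by
  rw [mono, map_list_prod]
  apply List.prod_eq_zero
  refine List.mem_map.mpr ⟨xgen k θ N q i ^ b i, List.mem_map.mpr ⟨i, List.mem_finRange i, rfl⟩, ?_⟩
  rw [map_pow, aug_xgen, zero_pow h]

lemma aug_mono_zero (hN' : ∀ i, N i ≠ 0) :
    qciAug k θ N q hN' (mono (k := k) (N := N) (q := q) (fun _ : Fin θ => 0)) = 1 := by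
  rw [mono_zero, map_one]

/-- The set of "active" coordinates. -/
def Pset (a b : Fin θ → ℕ) : Finset (Fin θ) :=
  Finset.univ.filter (fun i => a i ≠ 0 ∨ b i ≠ 0)

lemma mem_Pset {a b : Fin θ → ℕ} {i : Fin θ} :
    i ∈ Pset a b ↔ a i ≠ 0 ∨ b i ≠ 0 := by
  simp [Pset]

lemma Pset_min'_lt {a b : Fin θ → ℕ} (h : (Pset a b).Nonempty) {ℓ : Fin θ}
    (hℓ : ℓ < (Pset a b).min' h) : a ℓ = 0 ∧ b ℓ = 0 := by
  by_contra hc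
  have : ℓ ∈ Pset a b := mem_Pset.mpr (by tauto)
  exact absurd (Finset.min'_le _ _ this) (by omega)

lemma Pset_min'_mem {a b : Fin θ → ℕ} (h : (Pset a b).Nonempty) :
    a ((Pset a b).min' h) ≠ 0 ∨ b ((Pset a b).min' h) ≠ 0 :=
  mem_Pset.mp (Finset.min'_mem _ h)

lemma Pset_min'_eq {a b : Fin θ → ℕ} {i0 : Fin θ} (hmem : a i0 ≠ 0 ∨ b i0 ≠ 0)
    (hlt : ∀ ℓ, ℓ < i0 → a ℓ = 0 ∧ b ℓ = 0) :
    ∃ h : (Pset a b).Nonempty, (Pset a b).min' h = i0 := by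
  have hm : i0 ∈ Pset a b := mem_Pset.mpr hmem
  refine ⟨⟨i0, hm⟩, ?_⟩
  apply le_antisymm (Finset.min'_le _ _ hm)
  apply Finset.le_min'
  intro y hy
  by_contra hc
  obtain ⟨h1, h2⟩ := hlt y (by omega)
  rcases mem_Pset.mp hy with h | h <;> tauto

lemma exists_ne_zero_of_idx (n : ℕ) (a : Idx θ (n + 1)) : ∃ i, a.1 i ≠ 0 := by
  by_contra hc
  push_neg at hc
  have : ∑ i, a.1 i = 0 := Finset.sum_eq_zero fun i _ => hc i
  rw [a.2] at this
  omega

end Differential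
section Homotopy

variable {k : Type} [Field k] {θ : ℕ} {N : Fin θ → ℕ} {q : Fin θ → Fin θ → kˣ}

/-- Value of the contracting homotopy on the basis element `x^b Φ(a)`. -/
noncomputable def Hval (n : ℕ) (a : Idx θ n) (b : Fin θ → ℕ) : KnMod k θ N q (n + 1) :=
  if hP : (Pset a.1 b).Nonempty then
    if sigmaExp (N ((Pset a.1 b).min' hP)) (a.1 ((Pset a.1 b).min' hP) + 1)
        ≤ b ((Pset a.1 b).min' hP) then
      (gg (k := k) N q ((Pset a.1 b).min' hP)
          (Function.update a.1 ((Pset a.1 b).min' hP) (a.1 ((Pset a.1 b).min' hP) + 1))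
          (Function.update b ((Pset a.1 b).min' hP)
            (b ((Pset a.1 b).min' hP)
              - sigmaExp (N ((Pset a.1 b).min' hP)) (a.1 ((Pset a.1 b).min' hP) + 1))))⁻¹ •
        Finsupp.single (upIdx n a ((Pset a.1 b).min' hP))
          (mono (Function.update b ((Pset a.1 b).min' hP)
            (b ((Pset a.1 b).min' hP)
              - sigmaExp (N ((Pset a.1 b).min' hP)) (a.1 ((Pset a.1 b).min' hP) + 1))))
    else 0
  else 0

lemma Hval_empty (n : ℕ) (a : Idx θ n) (b : Fin θ → ℕ) (h : ¬ (Pset a.1 b).Nonempty) :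
    Hval (k := k) (N := N) (q := q) n a b = 0 := dif_neg h

lemma Hval_raise (n : ℕ) (a : Idx θ n) (b : Fin θ → ℕ) (hP : (Pset a.1 b).Nonempty)
    (i0 : Fin θ) (hmin : (Pset a.1 b).min' hP = i0)
    (hr : sigmaExp (N i0) (a.1 i0 + 1) ≤ b i0) :
    Hval (k := k) (N := N) (q := q) n a b
      = (gg (k := k) N q i0 (Function.update a.1 i0 (a.1 i0 + 1))
          (Function.update b i0 (b i0 - sigmaExp (N i0) (a.1 i0 + 1))))⁻¹ •
        Finsupp.single (upIdx n a i0)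
          (mono (Function.update b i0 (b i0 - sigmaExp (N i0) (a.1 i0 + 1)))) := by
  subst hmin
  rw [Hval, dif_pos hP, if_pos hr]

lemma Hval_notraise (n : ℕ) (a : Idx θ n) (b : Fin θ → ℕ) (hP : (Pset a.1 b).Nonempty)
    (i0 : Fin θ) (hmin : (Pset a.1 b).min' hP = i0)
    (hr : ¬ sigmaExp (N i0) (a.1 i0 + 1) ≤ b i0) :
    Hval (k := k) (N := N) (q := q) n a b = 0 := by
  subst hmin
  rw [Hval, dif_pos hP, if_neg hr]

/-- The contracting homotopy. -/
noncomputable def Hmap (hN : ∀ i, 2 ≤ N i) (n : ℕ) :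
    KnMod k θ N q n →ₗ[k] KnMod k θ N q (n + 1) :=
  Finsupp.lsum k fun a => (basisS k θ N q hN).constr ℕ fun c => Hval n a c.1

lemma Hmap_single_mono (hN : ∀ i, 2 ≤ N i) (n : ℕ) (a : Idx θ n) (b : Fin θ → ℕ)
    (hb : ∀ i, b i < N i) :
    Hmap hN n (Finsupp.single a (mono (k := k) (N := N) (q := q) b)) = Hval n a b := by
  rw [Hmap, Finsupp.lsum_single]
  have h1 : mono (k := k) (N := N) (q := q) b = basisS k θ N q hN ⟨b, hb⟩ :=
    (basisS_apply hN ⟨b, hb⟩).symm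
  rw [h1]; exact Module.Basis.constr_basis _ _ _ _

lemma Hmap_single_oor (hN : ∀ i, 2 ≤ N i) (n : ℕ) (a : Idx θ n) (b : Fin θ → ℕ)
    (hb : ¬ ∀ i, b i < N i) :
    Hmap hN n (Finsupp.single a (mono (k := k) (N := N) (q := q) b)) = 0 := by
  push_neg at hb
  obtain ⟨i, hi⟩ := hb
  rw [mono_eq_zero (i := i) hi, Finsupp.single_zero, map_zero]

end Homotopy
section HomotopyCore

variable {k : Type} [Field k] {θ : ℕ} {N : Fin θ → ℕ} {q : Fin θ → Fin θ → kˣ}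

lemma upd_upd_sub (a : Fin θ → ℕ) (i0 : Fin θ) :
    Function.update (Function.update a i0 (a i0 + 1)) i0
      (Function.update a i0 (a i0 + 1) i0 - 1) = a := by
  rw [Function.update_idem, Function.update_self]
  simp

/-- diagonal term: `d_{i0} (H x) = x` in the raisable case. -/
lemma dgr_H_diag (hN : ∀ i, 2 ≤ N i) (n : ℕ) (a : Idx θ n) (b : Fin θ → ℕ)
    (hP : (Pset a.1 b).Nonempty) (i0 : Fin θ) (hmin : (Pset a.1 b).min' hP = i0)
    (hr : sigmaExp (N i0) (a.1 i0 + 1) ≤ b i0) :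
    dgr k θ N q i0 n (Hval n a b) = Finsupp.single a (mono b) := by
  rw [Hval_raise n a b hP i0 hmin hr, LinearMap.map_smul_of_tower]
  have hA : (upIdx n a i0).1 i0 ≠ 0 := by
    show Function.update a.1 i0 (a.1 i0 + 1) i0 ≠ 0
    rw [Function.update_self]
    omega
  rw [dgr_single_mono i0 n (upIdx n a i0) hA]
  have e0 : (upIdx n a i0).1 = Function.update a.1 i0 (a.1 i0 + 1) := rfl
  have e1 : (upIdx n a i0).1 i0 = a.1 i0 + 1 := Function.update_self _ _ _
  have e2 : lowIdx n i0 (upIdx n a i0) hA = a := Subtype.ext (upd_upd_sub a.1 i0)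
  have e3 : Function.update (Function.update b i0 (b i0 - sigmaExp (N i0) (a.1 i0 + 1))) i0
      ((Function.update b i0 (b i0 - sigmaExp (N i0) (a.1 i0 + 1))) i0
        + sigmaExp (N i0) ((upIdx n a i0).1 i0)) = b := by
    rw [e1, Function.update_idem, Function.update_self, Nat.sub_add_cancel hr]
    exact Function.update_eq_self i0 b
  rw [e2, e3, e0, smul_smul, inv_mul_cancel₀ (gg_ne_zero _ _ _), one_smul]

/-- cross terms cancel. -/
lemma cross_zero (hN : ∀ i, 2 ≤ N i) (n : ℕ) (a : Idx θ (n + 1)) (b : Fin θ → ℕ)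
    (hb : ∀ i, b i < N i) (hP : (Pset a.1 b).Nonempty) (i0 : Fin θ)
    (hmin : (Pset a.1 b).min' hP = i0) (j : Fin θ) (hj : j ≠ i0) :
    dgr k θ N q j (n + 1) (Hmap hN (n + 1) (Finsupp.single a (mono b)))
      + Hmap hN n (dgr k θ N q j n (Finsupp.single a (mono b))) = 0 := by
  rw [Hmap_single_mono hN (n + 1) a b hb]
  by_cases haj : a.1 j = 0
  · -- both terms vanish
    rw [dgr_single_zero j n a _ haj, map_zero, add_zero]
    by_cases hr : sigmaExp (N i0) (a.1 i0 + 1) ≤ b i0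
    · rw [Hval_raise (n + 1) a b hP i0 hmin hr, LinearMap.map_smul_of_tower]
      have hAj : (upIdx (n + 1) a i0).1 j = 0 := by
        show Function.update a.1 i0 (a.1 i0 + 1) j = 0
        rw [Function.update_of_ne hj]
        exact haj
      rw [dgr_single_zero _ _ _ _ hAj, smul_zero]
    · rw [Hval_notraise (n + 1) a b hP i0 hmin hr, map_zero]
  · -- a j ≠ 0, so i0 < j
    have hij : i0 < j := by
      have h1 : i0 ≤ j := hmin ▸ Finset.min'_le _ _ (mem_Pset.mpr (Or.inl haj))
      exact lt_of_le_of_ne h1 (Ne.symm hj)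
    have hji0 : (i0 : Fin θ) ≠ j := ne_of_lt hij
    rw [dgr_single_mono j n a haj b, map_smul]
    have h1' : (lowIdx n j a haj).1 i0 = a.1 i0 := Function.update_of_ne hji0 _ _
    have h2' : Function.update b j (b j + sigmaExp (N j) (a.1 j)) i0 = b i0 :=
      Function.update_of_ne hji0 _ _
    by_cases hr : sigmaExp (N i0) (a.1 i0 + 1) ≤ b i0
    · -- hard case: ANTI cancellation
      rw [Hval_raise (n + 1) a b hP i0 hmin hr, LinearMap.map_smul_of_tower]
      have hAj : (upIdx (n + 1) a i0).1 j ≠ 0 := by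
        show Function.update a.1 i0 (a.1 i0 + 1) j ≠ 0
        rw [Function.update_of_ne hj]
        exact haj
      rw [dgr_single_mono j (n + 1) (upIdx (n + 1) a i0) hAj]
      have eup : ((upIdx (n + 1) a i0).1 : Fin θ → ℕ)
          = Function.update a.1 i0 (a.1 i0 + 1) := rfl
      have elow : ((lowIdx n j a haj).1 : Fin θ → ℕ)
          = Function.update a.1 j (a.1 j - 1) := rfl
      have eAj' : Function.update a.1 i0 (a.1 i0 + 1) j = a.1 j :=
        Function.update_of_ne hj _ _
      have h1'' : Function.update a.1 j (a.1 j - 1) i0 = a.1 i0 :=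
        Function.update_of_ne hji0 _ _
      simp only [eup, eAj']
      by_cases hOK : ∀ i, Function.update b j (b j + sigmaExp (N j) (a.1 j)) i < N i
      · rw [Hmap_single_mono hN n _ _ hOK]
        -- min' of the new pair is i0 and it is raisable
        have hmem' : (lowIdx n j a haj).1 i0 ≠ 0 ∨
            Function.update b j (b j + sigmaExp (N j) (a.1 j)) i0 ≠ 0 := by
          rw [h1', h2']
          exact hmin ▸ Pset_min'_mem hP
        have hlt' : ∀ ℓ, ℓ < i0 → (lowIdx n j a haj).1 ℓ = 0 ∧
            Function.update b j (b j + sigmaExp (N j) (a.1 j)) ℓ = 0 := by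
          intro ℓ hℓ
          have hz := Pset_min'_lt hP (hmin ▸ hℓ)
          have hℓj : ℓ ≠ j := ne_of_lt (lt_trans hℓ hij)
          constructor
          · show Function.update a.1 j (a.1 j - 1) ℓ = 0
            rw [Function.update_of_ne hℓj]
            exact hz.1
          · rw [Function.update_of_ne hℓj]
            exact hz.2
        obtain ⟨hP2, hmin2⟩ := Pset_min'_eq hmem' hlt'
        rw [Hval_raise n _ _ hP2 i0 hmin2 (by rw [h1', h2']; exact hr)]
        simp only [elow, h1'', h2']
        -- identify the two single terms
        have eY : lowIdx (n + 1) j (upIdx (n + 1) a i0) hAj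
            = upIdx n (lowIdx n j a haj) i0 := by
          apply Subtype.ext
          show Function.update (Function.update a.1 i0 (a.1 i0 + 1)) j
              ((upIdx (n + 1) a i0).1 j - 1)
            = Function.update ((lowIdx n j a haj).1) i0
              ((lowIdx n j a haj).1 i0 + 1)
          rw [eup, elow, eAj', h1'', Function.update_comm hji0]
        have eBj : Function.update b i0 (b i0 - sigmaExp (N i0) (a.1 i0 + 1)) j = b j :=
          Function.update_of_ne (Ne.symm hji0) _ _
        have eM : Function.update (Function.update b i0
                (b i0 - sigmaExp (N i0) (a.1 i0 + 1))) j
              (Function.update b i0 (b i0 - sigmaExp (N i0) (a.1 i0 + 1)) j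
                + sigmaExp (N j) (a.1 j))
            = Function.update (Function.update b j
                (b j + sigmaExp (N j) (a.1 j))) i0
              (b i0 - sigmaExp (N i0) (a.1 i0 + 1)) := by
          rw [eBj, Function.update_comm (Ne.symm hji0)]
        rw [eY, eM]
        rw [smul_smul, smul_smul, ← add_smul]
        -- coefficient is zero by the anticommutation identity
        have hup1 : 1 ≤ Function.update a.1 i0 (a.1 i0 + 1) i0 := by
          rw [Function.update_self]
          omega
        have hanti := anti_lt (k := k) (N := N) (q := q) hij
          (a := Function.update a.1 i0 (a.1 i0 + 1))
          (b := Function.update b i0 (b i0 - sigmaExp (N i0) (a.1 i0 + 1))) hup1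
        -- rewrite the four arguments in hanti
        have r1 : Function.update (Function.update a.1 i0 (a.1 i0 + 1)) i0
            (Function.update a.1 i0 (a.1 i0 + 1) i0 - 1) = a.1 := upd_upd_sub a.1 i0
        have r2 : Function.update (Function.update b i0
              (b i0 - sigmaExp (N i0) (a.1 i0 + 1))) i0
            (Function.update b i0 (b i0 - sigmaExp (N i0) (a.1 i0 + 1)) i0
              + sigmaExp (N i0) (Function.update a.1 i0 (a.1 i0 + 1) i0)) = b := by
          rw [Function.update_self, Function.update_idem, Function.update_self,
            Nat.sub_add_cancel hr]
          exact Function.update_eq_self i0 b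
        have r3' : Function.update (Function.update a.1 i0 (a.1 i0 + 1)) j (a.1 j - 1)
            = Function.update (Function.update a.1 j (a.1 j - 1)) i0 (a.1 i0 + 1) :=
          Function.update_comm hji0 _ _ _
        rw [r1, r2, eAj', r3', eM] at hanti
        set c1 := gg (k := k) N q i0 (Function.update a.1 i0 (a.1 i0 + 1))
          (Function.update b i0 (b i0 - sigmaExp (N i0) (a.1 i0 + 1))) with hc1
        set c2 := gg (k := k) N q j (Function.update a.1 i0 (a.1 i0 + 1))
          (Function.update b i0 (b i0 - sigmaExp (N i0) (a.1 i0 + 1))) with hc2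
        set c3 := gg (k := k) N q j a.1 b with hc3
        set c4 := gg (k := k) N q i0 (Function.update (Function.update a.1 j (a.1 j - 1))
          i0 (a.1 i0 + 1)) (Function.update (Function.update b j
            (b j + sigmaExp (N j) (a.1 j))) i0
            (b i0 - sigmaExp (N i0) (a.1 i0 + 1))) with hc4
        have hzero : c1⁻¹ * c2 + c3 * c4⁻¹ = 0 := by
          have h1 : c1 ≠ 0 := gg_ne_zero _ _ _
          have h4 : c4 ≠ 0 := gg_ne_zero _ _ _
          field_simp
          linear_combination hanti
        rw [hzero, zero_smul]
      · -- out of range: both terms are zero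
        rw [Hmap_single_oor hN n _ _ hOK, smul_zero, add_zero]
        push_neg at hOK
        obtain ⟨i2, hi2⟩ := hOK
        have hi2j : i2 = j := by
          by_contra hne
          rw [Function.update_of_ne hne] at hi2
          exact absurd (hb i2) (by omega)
        rw [hi2j, Function.update_self] at hi2
        have hm0 : mono (k := k) (N := N) (q := q)
            (Function.update (Function.update b i0
                (b i0 - sigmaExp (N i0) (a.1 i0 + 1))) j
              (Function.update b i0 (b i0 - sigmaExp (N i0) (a.1 i0 + 1)) j
                + sigmaExp (N j) (a.1 j))) = 0 := by
          apply mono_eq_zero (i := j)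
          rw [Function.update_self,
            Function.update_of_ne (Ne.symm hji0)]
          exact hi2
        rw [hm0, Finsupp.single_zero, smul_zero, smul_zero]
    · -- not raisable: both terms vanish
      rw [Hval_notraise (n + 1) a b hP i0 hmin hr, map_zero, zero_add]
      by_cases hOK : ∀ i, Function.update b j (b j + sigmaExp (N j) (a.1 j)) i < N i
      · rw [Hmap_single_mono hN n _ _ hOK]
        have hmem' : (lowIdx n j a haj).1 i0 ≠ 0 ∨
            Function.update b j (b j + sigmaExp (N j) (a.1 j)) i0 ≠ 0 := by
          rw [h1', h2']
          exact hmin ▸ Pset_min'_mem hP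
        have hlt' : ∀ ℓ, ℓ < i0 → (lowIdx n j a haj).1 ℓ = 0 ∧
            Function.update b j (b j + sigmaExp (N j) (a.1 j)) ℓ = 0 := by
          intro ℓ hℓ
          have hz := Pset_min'_lt hP (hmin ▸ hℓ)
          have hℓj : ℓ ≠ j := ne_of_lt (lt_trans hℓ hij)
          constructor
          · show Function.update a.1 j (a.1 j - 1) ℓ = 0
            rw [Function.update_of_ne hℓj]
            exact hz.1
          · rw [Function.update_of_ne hℓj]
            exact hz.2
        obtain ⟨hP2, hmin2⟩ := Pset_min'_eq hmem' hlt'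
        rw [Hval_notraise n _ _ hP2 i0 hmin2 (by rw [h1', h2']; exact hr), smul_zero]
      · rw [Hmap_single_oor hN n _ _ hOK, smul_zero]

end HomotopyCore
section Diag

variable {k : Type} [Field k] {θ : ℕ} {N : Fin θ → ℕ} {q : Fin θ → Fin θ → kˣ}

lemma sigmaExp_one (m : ℕ) : sigmaExp m 1 = 1 := by
  rw [sigmaExp, if_pos odd_one]

lemma diag_term (hN : ∀ i, 2 ≤ N i) (n : ℕ) (a : Idx θ (n + 1)) (b : Fin θ → ℕ)
    (hb : ∀ i, b i < N i) (hP : (Pset a.1 b).Nonempty) (i0 : Fin θ)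
    (hmin : (Pset a.1 b).min' hP = i0) :
    dgr k θ N q i0 (n + 1) (Hmap hN (n + 1) (Finsupp.single a (mono b)))
      + Hmap hN n (dgr k θ N q i0 n (Finsupp.single a (mono b)))
    = Finsupp.single a (mono b) := by
  rw [Hmap_single_mono hN (n + 1) a b hb]
  by_cases hr : sigmaExp (N i0) (a.1 i0 + 1) ≤ b i0
  · rw [dgr_H_diag hN (n + 1) a b hP i0 hmin hr]
    by_cases hai : a.1 i0 = 0
    · rw [dgr_single_zero i0 n a _ hai, map_zero, add_zero]
    · rw [dgr_single_mono i0 n a hai b]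
      have hm0 : mono (k := k) (N := N) (q := q)
          (Function.update b i0 (b i0 + sigmaExp (N i0) (a.1 i0))) = 0 := by
        apply mono_eq_zero (i := i0)
        rw [Function.update_self]
        have hp := sigma_pair (m := N i0) (by have := hN i0; omega) (a.1 i0)
        omega
      rw [hm0, Finsupp.single_zero, smul_zero, map_zero, add_zero]
  · rw [Hval_notraise (n + 1) a b hP i0 hmin hr, map_zero, zero_add]
    have hai : a.1 i0 ≠ 0 := by
      intro h0
      have hb0 : b i0 ≠ 0 := by
        rcases hmin ▸ Pset_min'_mem hP with h | h
        · exact absurd h0 h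
        · exact h
      apply hr
      rw [h0]
      rw [show (0 : ℕ) + 1 = 1 from rfl, sigmaExp_one]
      omega
    rw [dgr_single_mono i0 n a hai b, map_smul]
    have hOK : ∀ i, Function.update b i0 (b i0 + sigmaExp (N i0) (a.1 i0)) i < N i := by
      intro i
      rcases eq_or_ne i i0 with rfl | hne
      · rw [Function.update_self]
        exact sigma_notraise (hN i) hr
      · rw [Function.update_of_ne hne]
        exact hb i
    rw [Hmap_single_mono hN n _ _ hOK]
    have elow : ((lowIdx n i0 a hai).1 : Fin θ → ℕ)
        = Function.update a.1 i0 (a.1 i0 - 1) := rfl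
    have hv1 : Function.update a.1 i0 (a.1 i0 - 1) i0 = a.1 i0 - 1 :=
      Function.update_self _ _ _
    have hv2 : Function.update b i0 (b i0 + sigmaExp (N i0) (a.1 i0)) i0
        = b i0 + sigmaExp (N i0) (a.1 i0) := Function.update_self _ _ _
    have hmem' : (lowIdx n i0 a hai).1 i0 ≠ 0 ∨
        Function.update b i0 (b i0 + sigmaExp (N i0) (a.1 i0)) i0 ≠ 0 := by
      right
      rw [hv2]
      have := sigma_pos (hN i0) (a.1 i0)
      omega
    have hlt' : ∀ ℓ, ℓ < i0 → (lowIdx n i0 a hai).1 ℓ = 0 ∧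
        Function.update b i0 (b i0 + sigmaExp (N i0) (a.1 i0)) ℓ = 0 := by
      intro ℓ hℓ
      have hz := Pset_min'_lt hP (hmin ▸ hℓ)
      have hℓi : ℓ ≠ i0 := ne_of_lt hℓ
      constructor
      · show Function.update a.1 i0 (a.1 i0 - 1) ℓ = 0
        rw [Function.update_of_ne hℓi]
        exact hz.1
      · rw [Function.update_of_ne hℓi]
        exact hz.2
    obtain ⟨hP2, hmin2⟩ := Pset_min'_eq hmem' hlt'
    have hplus : a.1 i0 - 1 + 1 = a.1 i0 := by omega
    have hraise : sigmaExp (N i0) ((lowIdx n i0 a hai).1 i0 + 1)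
        ≤ Function.update b i0 (b i0 + sigmaExp (N i0) (a.1 i0)) i0 := by
      rw [elow, hv1, hv2, hplus]
      omega
    rw [Hval_raise n _ _ hP2 i0 hmin2 hraise]
    simp only [elow, hv1, hv2, hplus]
    have eA2 : Function.update (Function.update a.1 i0 (a.1 i0 - 1)) i0 (a.1 i0) = a.1 := by
      rw [Function.update_idem]
      exact Function.update_eq_self _ _
    have eB2 : Function.update (Function.update b i0
          (b i0 + sigmaExp (N i0) (a.1 i0))) i0
        (b i0 + sigmaExp (N i0) (a.1 i0) - sigmaExp (N i0) (a.1 i0)) = b := by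
      rw [Function.update_idem, Nat.add_sub_cancel]
      exact Function.update_eq_self _ _
    have eIdx : upIdx n (lowIdx n i0 a hai) i0 = a := by
      apply Subtype.ext
      show Function.update ((lowIdx n i0 a hai).1) i0 ((lowIdx n i0 a hai).1 i0 + 1) = a.1
      rw [elow, hv1, hplus, eA2]
    rw [eA2, eB2, eIdx]
    rw [smul_smul, mul_inv_cancel₀ (gg_ne_zero _ _ _), one_smul]

lemma homotopy_basis (hN : ∀ i, 2 ≤ N i) (n : ℕ) (a : Idx θ (n + 1)) (b : Fin θ → ℕ)
    (hb : ∀ i, b i < N i) :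
    dTot k θ N q (n + 1) (Hmap hN (n + 1) (Finsupp.single a (mono b)))
      + Hmap hN n (dTot k θ N q n (Finsupp.single a (mono b)))
    = Finsupp.single a (mono b) := by
  obtain ⟨i1, hi1⟩ := exists_ne_zero_of_idx n a
  have hP : (Pset a.1 b).Nonempty := ⟨i1, mem_Pset.mpr (Or.inl hi1)⟩
  rw [dTot, dTot, LinearMap.sum_apply, LinearMap.sum_apply, map_sum,
    ← Finset.sum_add_distrib]
  rw [Finset.sum_eq_single_of_mem ((Pset a.1 b).min' hP)
    (Finset.mem_univ _)
    (fun j _ hj => cross_zero hN n a b hb hP _ rfl j hj)]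
  exact diag_term hN n a b hb hP _ rfl

lemma idx0_coords (a : Idx θ 0) (i : Fin θ) : a.1 i = 0 := by
  have h := a.2
  exact (Finset.sum_eq_zero_iff.mp h) i (Finset.mem_univ i)

lemma homotopy_basis0 (hN : ∀ i, 2 ≤ N i) (hN' : ∀ i, N i ≠ 0) (a : Idx θ 0)
    (b : Fin θ → ℕ) (hb : ∀ i, b i < N i) :
    dTot k θ N q 0 (Hmap hN 0 (Finsupp.single a (mono b)))
      + Finsupp.single a (algebraMap k (QCI k θ N q) (qciAug k θ N q hN' (mono b)))
    = Finsupp.single a (mono b) := by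
  rw [Hmap_single_mono hN 0 a b hb]
  by_cases hex : ∃ i, b i ≠ 0
  · obtain ⟨i1, hi1⟩ := hex
    have hP : (Pset a.1 b).Nonempty := ⟨i1, mem_Pset.mpr (Or.inr hi1)⟩
    have hb0 : b ((Pset a.1 b).min' hP) ≠ 0 := by
      rcases Pset_min'_mem hP with h | h
      · exact absurd (idx0_coords a _) h
      · exact h
    rw [aug_mono_ne hN' _ hb0, map_zero, Finsupp.single_zero, add_zero]
    have hr : sigmaExp (N ((Pset a.1 b).min' hP)) (a.1 ((Pset a.1 b).min' hP) + 1)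
        ≤ b ((Pset a.1 b).min' hP) := by
      rw [idx0_coords a _, show (0 : ℕ) + 1 = 1 from rfl, sigmaExp_one]
      omega
    rw [dTot, LinearMap.sum_apply]
    rw [Finset.sum_eq_single_of_mem ((Pset a.1 b).min' hP) (Finset.mem_univ _) ?hcr]
    · exact dgr_H_diag hN 0 a b hP _ rfl hr
    case hcr =>
      intro j _ hj
      rw [Hval_raise 0 a b hP _ rfl hr, LinearMap.map_smul_of_tower]
      have hAj : (upIdx 0 a ((Pset a.1 b).min' hP)).1 j = 0 := by
        show Function.update a.1 _ _ j = 0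
        rw [Function.update_of_ne hj]
        exact idx0_coords a j
      rw [dgr_single_zero _ _ _ _ hAj, smul_zero]
  · push_neg at hex
    have hb0 : b = fun _ => 0 := funext hex
    subst hb0
    have hPe : ¬ (Pset a.1 (fun _ => 0)).Nonempty := by
      rintro ⟨i, hi⟩
      rcases mem_Pset.mp hi with h | h
      · exact h (idx0_coords a i)
      · exact h rfl
    rw [Hval_empty _ _ _ hPe, map_zero, zero_add, aug_mono_zero hN', map_one, mono_zero]

end Diag
section DD

variable {k : Type} [Field k] {θ : ℕ} {N : Fin θ → ℕ} {q : Fin θ → Fin θ → kˣ}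

lemma dd_zero_left (n : ℕ) (a : Idx θ (n + 2)) (b : Fin θ → ℕ) (i j : Fin θ)
    (h : a.1 i = 0) :
    dgr k θ N q j n (dgr k θ N q i (n + 1) (Finsupp.single a (mono b))) = 0 := by
  rw [dgr_single_zero _ _ _ _ h, map_zero]

lemma dd_zero_right (n : ℕ) (a : Idx θ (n + 2)) (b : Fin θ → ℕ) (i j : Fin θ)
    (hi : a.1 i ≠ 0) (hj : a.1 j = 0) (hne : j ≠ i) :
    dgr k θ N q j n (dgr k θ N q i (n + 1) (Finsupp.single a (mono b))) = 0 := by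
  rw [dgr_single_mono i (n + 1) a hi b, LinearMap.map_smul_of_tower]
  have h1 : (lowIdx (n + 1) i a hi).1 j = 0 := by
    show Function.update a.1 i (a.1 i - 1) j = 0
    rw [Function.update_of_ne hne]
    exact hj
  rw [dgr_single_zero _ _ _ _ h1, smul_zero]

lemma dd_diag (hN : ∀ i, 2 ≤ N i) (n : ℕ) (a : Idx θ (n + 2)) (b : Fin θ → ℕ)
    (i : Fin θ) :
    dgr k θ N q i n (dgr k θ N q i (n + 1) (Finsupp.single a (mono b))) = 0 := by
  by_cases h0 : a.1 i = 0
  · exact dd_zero_left n a b i i h0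
  · rw [dgr_single_mono i (n + 1) a h0 b, LinearMap.map_smul_of_tower]
    by_cases h1 : (lowIdx (n + 1) i a h0).1 i = 0
    · rw [dgr_single_zero _ _ _ _ h1, smul_zero]
    · rw [dgr_single_mono i n _ h1 _]
      have hval : (lowIdx (n + 1) i a h0).1 i = a.1 i - 1 := Function.update_self _ _ _
      have hm0 : mono (k := k) (N := N) (q := q)
          (Function.update (Function.update b i (b i + sigmaExp (N i) (a.1 i))) i
            (Function.update b i (b i + sigmaExp (N i) (a.1 i)) i
              + sigmaExp (N i) ((lowIdx (n + 1) i a h0).1 i))) = 0 := by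
        apply mono_eq_zero (i := i)
        rw [Function.update_self, Function.update_self, hval]
        have hp := sigma_pair (m := N i) (by have := hN i; omega) (a.1 i - 1)
        have hplus : a.1 i - 1 + 1 = a.1 i := by omega
        rw [hplus] at hp
        omega
      rw [hm0, Finsupp.single_zero, smul_zero, smul_zero]

lemma dd_term (n : ℕ) (a : Idx θ (n + 2)) (b : Fin θ → ℕ) {i j : Fin θ} (hij : i < j)
    (hi : a.1 i ≠ 0) (hj : a.1 j ≠ 0) :
    dgr k θ N q j n (dgr k θ N q i (n + 1) (Finsupp.single a (mono b)))
      + dgr k θ N q i n (dgr k θ N q j (n + 1) (Finsupp.single a (mono b))) = 0 := by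
  have hji : (i : Fin θ) ≠ j := ne_of_lt hij
  rw [dgr_single_mono i (n + 1) a hi b, dgr_single_mono j (n + 1) a hj b,
    LinearMap.map_smul_of_tower, LinearMap.map_smul_of_tower]
  have hAj : (lowIdx (n + 1) i a hi).1 j ≠ 0 := by
    show Function.update a.1 i (a.1 i - 1) j ≠ 0
    rw [Function.update_of_ne (Ne.symm hji)]
    exact hj
  have hAi : (lowIdx (n + 1) j a hj).1 i ≠ 0 := by
    show Function.update a.1 j (a.1 j - 1) i ≠ 0
    rw [Function.update_of_ne hji]
    exact hi
  rw [dgr_single_mono j n _ hAj _, dgr_single_mono i n _ hAi _]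
  have elowi : ((lowIdx (n + 1) i a hi).1 : Fin θ → ℕ)
      = Function.update a.1 i (a.1 i - 1) := rfl
  have elowj : ((lowIdx (n + 1) j a hj).1 : Fin θ → ℕ)
      = Function.update a.1 j (a.1 j - 1) := rfl
  have eij : Function.update a.1 i (a.1 i - 1) j = a.1 j :=
    Function.update_of_ne (Ne.symm hji) _ _
  have eji : Function.update a.1 j (a.1 j - 1) i = a.1 i :=
    Function.update_of_ne hji _ _
  have ebij : Function.update b i (b i + sigmaExp (N i) (a.1 i)) j = b j :=
    Function.update_of_ne (Ne.symm hji) _ _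
  have ebji : Function.update b j (b j + sigmaExp (N j) (a.1 j)) i = b i :=
    Function.update_of_ne hji _ _
  simp only [elowi, elowj, eij, eji, ebij, ebji]
  -- identify the targets
  have eIdx : lowIdx n j (lowIdx (n + 1) i a hi) hAj
      = lowIdx n i (lowIdx (n + 1) j a hj) hAi := by
    apply Subtype.ext
    show Function.update (Function.update a.1 i (a.1 i - 1)) j
        ((lowIdx (n + 1) i a hi).1 j - 1)
      = Function.update (Function.update a.1 j (a.1 j - 1)) i
        ((lowIdx (n + 1) j a hj).1 i - 1)
    rw [elowi, elowj, eij, eji, Function.update_comm hji]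
  have eMono : Function.update (Function.update b i (b i + sigmaExp (N i) (a.1 i))) j
        (b j + sigmaExp (N j) (a.1 j))
      = Function.update (Function.update b j (b j + sigmaExp (N j) (a.1 j))) i
        (b i + sigmaExp (N i) (a.1 i)) := Function.update_comm hji _ _ _
  rw [eIdx, eMono]
  rw [smul_smul, smul_smul, ← add_smul]
  have hanti := anti_lt (k := k) (N := N) (q := q) hij (a := a.1) (b := b)
    (by omega : 1 ≤ a.1 i)
  rw [hanti, zero_smul]

lemma dd_any (hN : ∀ i, 2 ≤ N i) (n : ℕ) (a : Idx θ (n + 2)) (b : Fin θ → ℕ)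
    (i j : Fin θ) :
    dgr k θ N q j n (dgr k θ N q i (n + 1) (Finsupp.single a (mono b)))
      + dgr k θ N q i n (dgr k θ N q j (n + 1) (Finsupp.single a (mono b))) = 0 := by
  rcases eq_or_ne i j with rfl | hij
  · rw [dd_diag hN n a b i, add_zero]
  by_cases hi : a.1 i = 0
  · rw [dd_zero_left n a b i j hi, zero_add]
    by_cases hj : a.1 j = 0
    · exact dd_zero_left n a b j i hj
    · exact dd_zero_right n a b j i hj hi hij
  · by_cases hj : a.1 j = 0
    · rw [dd_zero_right n a b i j hi hj (Ne.symm hij), zero_add]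
      exact dd_zero_left n a b j i hj
    · rcases lt_or_gt_of_ne hij with hlt | hgt
      · exact dd_term n a b hlt hi hj
      · rw [add_comm]
        exact dd_term n a b hgt hj hi

lemma sum_antisym {M : Type*} [AddCommMonoid M] {ι : Type*} [Fintype ι] [DecidableEq ι]
    (F : ι → ι → M) (hF : ∀ i j, F i j + F j i = 0) (hd : ∀ i, F i i = 0) :
    ∑ i, ∑ j, F i j = 0 := by
  rw [← Finset.sum_product']
  refine Finset.sum_involution (fun p _ => (p.2, p.1)) (fun p _ => hF p.1 p.2)
    ?_ (fun p hp => Finset.mem_univ _) (fun p hp => rfl)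
  rintro ⟨i, j⟩ - hne0
  intro heq2
  have hij : i = j := by
    have h2 := congrArg Prod.snd heq2
    simpa using h2
  exact hne0 (hij ▸ hd i)

lemma dd_basis (hN : ∀ i, 2 ≤ N i) (n : ℕ) (a : Idx θ (n + 2)) (b : Fin θ → ℕ) :
    dTot k θ N q n (dTot k θ N q (n + 1) (Finsupp.single a (mono b))) = 0 := by
  simp only [dTot, LinearMap.sum_apply, map_sum]
  exact sum_antisym
    (fun x d => dgr k θ N q d n (dgr k θ N q x (n + 1) (Finsupp.single a (mono b))))
    (fun i j => dd_any hN n a b i j) (fun i => dd_diag hN n a b i)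

end DD
section Assembly

variable {k : Type} [Field k] {θ : ℕ} {N : Fin θ → ℕ} {q : Fin θ → Fin θ → kˣ}

lemma homotopy_id (hN : ∀ i, 2 ≤ N i) (n : ℕ) (y : KnMod k θ N q (n + 1)) :
    dTot k θ N q (n + 1) (Hmap hN (n + 1) y) + Hmap hN n (dTot k θ N q n y) = y := by
  have key : ((dTot k θ N q (n + 1)).restrictScalars k).comp (Hmap hN (n + 1))
      + (Hmap hN n).comp ((dTot k θ N q n).restrictScalars k)
      = (LinearMap.id : KnMod k θ N q (n + 1) →ₗ[k] KnMod k θ N q (n + 1)) := by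
    apply Finsupp.lhom_ext'
    intro a
    apply (basisS k θ N q hN).ext
    intro c
    simp only [LinearMap.comp_apply, LinearMap.add_apply, Finsupp.lsingle_apply,
      LinearMap.id_apply, LinearMap.coe_restrictScalars, basisS_apply hN c]
    exact homotopy_basis hN n a c.1 c.2
  have h2 := LinearMap.congr_fun key y
  simpa using h2

/-- The unique degree-0 index. -/
def a0 (θ : ℕ) : Idx θ 0 := ⟨fun _ => 0, by simp⟩

/-- The augmentation as a `k`-linear map. -/
noncomputable def epslin (hN' : ∀ i, N i ≠ 0) : KnMod k θ N q 0 →ₗ[k] k :=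
  Finsupp.lsum k fun _ => (qciAug k θ N q hN').toLinearMap

lemma epslin_single (hN' : ∀ i, N i ≠ 0) (a : Idx θ 0) (t : QCI k θ N q) :
    epslin hN' (Finsupp.single a t) = qciAug k θ N q hN' t := by
  rw [epslin, Finsupp.lsum_single]
  rfl

lemma homotopy_id0 (hN : ∀ i, 2 ≤ N i) (hN' : ∀ i, N i ≠ 0) (y : KnMod k θ N q 0) :
    dTot k θ N q 0 (Hmap hN 0 y)
      + Finsupp.single (a0 θ) (algebraMap k (QCI k θ N q) (epslin hN' y)) = y := by
  have key : ((dTot k θ N q 0).restrictScalars k).comp (Hmap hN 0)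
      + ((((Finsupp.lsingle (a0 θ) :
            QCI k θ N q →ₗ[QCI k θ N q] KnMod k θ N q 0)).restrictScalars k).comp
          ((Algebra.linearMap k (QCI k θ N q)).comp (epslin hN')))
      = (LinearMap.id : KnMod k θ N q 0 →ₗ[k] KnMod k θ N q 0) := by
    apply Finsupp.lhom_ext'
    intro a
    apply (basisS k θ N q hN).ext
    intro c
    have ha : a = a0 θ := Subtype.ext (funext fun i => idx0_coords a i)
    simp only [LinearMap.comp_apply, LinearMap.add_apply, Finsupp.lsingle_apply,
      LinearMap.id_apply, LinearMap.coe_restrictScalars, basisS_apply hN c,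
      Algebra.linearMap_apply, epslin_single hN']
    rw [ha]
    exact homotopy_basis0 hN hN' (a0 θ) c.1 c.2
  have h2 := LinearMap.congr_fun key y
  simpa using h2

lemma dgr_single_apply (i : Fin θ) (n : ℕ) (a : Idx θ (n + 1)) (h : a.1 i ≠ 0)
    (s : QCI k θ N q) :
    dgr k θ N q i n (Finsupp.single a s)
      = Finsupp.single (lowIdx n i a h)
          (s * (algebraMap k (QCI k θ N q) (dCoeff k θ N q i a.1)
            * xgen k θ N q i ^ sigmaExp (N i) (a.1 i))) := by
  rw [dgr, Finsupp.lsum_single]; erw [dif_neg h]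
  rfl

lemma aug_d (hN : ∀ i, 2 ≤ N i) (hN' : ∀ i, N i ≠ 0) (y : KnMod k θ N q 1) :
    epslin hN' (dTot k θ N q 0 y) = 0 := by
  have key : (epslin hN').comp ((dTot k θ N q 0).restrictScalars k) = 0 := by
    apply Finsupp.lhom_ext
    intro a s
    simp only [LinearMap.comp_apply, LinearMap.coe_restrictScalars, LinearMap.zero_apply]
    rw [dTot, LinearMap.sum_apply, map_sum]
    apply Finset.sum_eq_zero
    intro j _
    by_cases hj : a.1 j = 0
    · rw [dgr_single_zero _ _ _ _ hj, map_zero]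
    · rw [dgr_single_apply j 0 a hj s, epslin_single hN', map_mul, map_mul, map_pow,
        aug_xgen, zero_pow (by have := sigma_pos (hN j) (a.1 j); omega), mul_zero, mul_zero]
  exact LinearMap.congr_fun key y

lemma dd (hN : ∀ i, 2 ≤ N i) (n : ℕ) (y : KnMod k θ N q (n + 2)) :
    dTot k θ N q n (dTot k θ N q (n + 1) y) = 0 := by
  have key : ((dTot k θ N q n).restrictScalars k).comp
      ((dTot k θ N q (n + 1)).restrictScalars k) = 0 := by
    apply Finsupp.lhom_ext'
    intro a
    apply (basisS k θ N q hN).ext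
    intro c
    simp only [LinearMap.comp_apply, Finsupp.lsingle_apply,
      LinearMap.coe_restrictScalars, LinearMap.zero_apply, basisS_apply hN c]
    exact dd_basis hN n a c.1
  exact LinearMap.congr_fun key y

end Assembly
theorem koszul_complex_is_free_resolution (hN : ∀ i, 2 ≤ N i) :
    letI S := QCI k θ N q
    letI : Module S k :=
      Module.compHom k (qciAug k θ N q (fun i => by have := hN i; omega)).toRingHom
    letI εmod : KnMod k θ N q 0 →ₗ[S] k :=
      Finsupp.lsum ℕ fun _ =>
        { toFun := qciAug k θ N q (fun i => by have := hN i; omega)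
          map_add' := fun a b => map_add _ a b
          map_smul' := fun a b => by
            simp only [smul_eq_mul, map_mul, RingHom.id_apply]; rfl }
    -- each term is a free `S`-module,
    (∀ n, Module.Free S (KnMod k θ N q n)) ∧
    -- the augmented complex is exact, i.e. `K_•` is a free resolution of `k`
    Function.Surjective εmod ∧
    Function.Exact (dTot k θ N q 0) εmod ∧
    (∀ n, Function.Exact (dTot k θ N q (n + 1)) (dTot k θ N q n)) := by
  have hN' : ∀ i, N i ≠ 0 := fun i => by have := hN i; omega
  refine ⟨fun n => inferInstance, ?_, ?_, ?_⟩
  · -- surjectivity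
    intro c
    refine ⟨Finsupp.single (a0 θ) (algebraMap k (QCI k θ N q) c), ?_⟩
    show epslin (k := k) (N := N) (q := q) hN'
      (Finsupp.single (a0 θ) (algebraMap k (QCI k θ N q) c)) = c
    rw [epslin_single hN', AlgHom.commutes]
    exact Algebra.algebraMap_self_apply c
  · -- exactness at degree 0
    intro y
    constructor
    · intro h0
      have h0' : epslin (k := k) (N := N) (q := q) hN' y = 0 := h0
      refine ⟨Hmap hN 0 y, ?_⟩
      have hid := homotopy_id0 hN hN' y
      rw [h0', map_zero, Finsupp.single_zero, add_zero] at hid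
      exact hid
    · rintro ⟨x, rfl⟩
      show epslin (k := k) (N := N) (q := q) hN' (dTot k θ N q 0 x) = 0
      exact aug_d hN hN' x
  · -- exactness in positive degrees
    intro n y
    constructor
    · intro h0
      refine ⟨Hmap hN (n + 1) y, ?_⟩
      have hid := homotopy_id hN n y
      rw [h0, map_zero, add_zero] at hid
      exact hid
    · rintro ⟨x, rfl⟩
      exact dd hN n x
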